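/- arXiv:1811.02877 — 6 statements merged into one kernel-verified Lean document; each statement's English description precedes it below -/
import Mathlib

section
/- Let p be a prime, F an algebraically closed field of characteristic p, and G a finite group. Suppose K and K' are p'-residue-free normal subgroups of G, F₀ is an indecomposable projective F[G/K]-module, F₀' is an indecomposable projective F[G/K']-module, and the inflation of F₀ to G is isomorphic to the inflation of F₀' to G as F[G]-modules. Then K = K' and F₀ ≅ F₀' as F[G/K]-modules. -/
open CategoryTheory Limits

/-- A representation is indecomposable if it is nonzero and in any decomposition
as a direct sum of two representations, one factor is zero. -/
def RepIndecomposable {F : Type} [Field F] {G : Type} [Group G] (M : Rep.{0} F G) : Prop :=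
  ¬ IsZero M ∧ ∀ X Y : Rep.{0} F G, Nonempty (M ≅ X ⊞ Y) → IsZero X ∨ IsZero Y

/-- A group is `p'`-residue-free if it is generated by its elements of `p`-power order. -/
def IsPResidueFree (p : ℕ) (G : Type*) [Group G] : Prop :=
  Subgroup.closure {x : G | ∃ n : ℕ, x ^ p ^ n = 1} = ⊤

open Classical in
lemma exists_norm_mul_eq {F : Type} [Field F] {Q : Type} [Group Q] (x : Q)
    (hord : 0 < orderOf x) (r : MonoidAlgebra F Q)
    (hr : ∀ g : Q, r.coeff (x⁻¹ * g) = r.coeff g) :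
    ∃ v : MonoidAlgebra F Q,
      (∑ t ∈ Finset.range (orderOf x), MonoidAlgebra.single (x ^ t) (1 : F)) * v = r := by
  set q := orderOf x with hq
  have hpow : ∀ (t : ℕ) (g : Q), r.coeff (x ^ t * g) = r.coeff g := by
    intro t
    induction t with
    | zero => intro g; simp
    | succ t ih =>
      intro g
      have h1 : r.coeff (x * (x ^ t * g)) = r.coeff (x ^ t * g) := by
        have := hr (x * (x ^ t * g))
        rw [inv_mul_cancel_left] at this
        exact this.symm
      rw [pow_succ', mul_assoc, h1, ih]
  have hz : ∀ (z : ℤ) (g : Q), r.coeff (x ^ z * g) = r.coeff g := by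
    intro z g
    have h1 : x ^ z = x ^ (z % (q : ℤ)).toNat := by
      rw [← zpow_natCast, Int.toNat_of_nonneg (Int.emod_nonneg _ (by positivity)),
        zpow_mod_orderOf]
    rw [h1, hpow]
  letI s : Setoid Q :=
    ⟨fun a b => ∃ z : ℤ, x ^ z * b = a,
      ⟨fun a => ⟨0, by simp⟩,
       fun {a b} ⟨z, h⟩ => ⟨-z, by rw [← h]; group⟩,
       fun {a b c} ⟨z, h⟩ ⟨w, h'⟩ => ⟨z + w, by rw [← h, ← h']; group⟩⟩⟩
  set rep : Q → Q := fun g => (Quotient.mk s g).out with hrep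
  have hrep_spec : ∀ g : Q, ∃ z : ℤ, x ^ z * g = rep g := fun g =>
    Quotient.exact (Quotient.out_eq (Quotient.mk s g))
  have hrep_const : ∀ a b : Q, (∃ z : ℤ, x ^ z * b = a) → rep a = rep b := by
    intro a b h
    have h2 : (Quotient.mk s a) = Quotient.mk s b := Quotient.sound h
    exact congrArg Quotient.out h2
  have hrconst : ∀ g : Q, r.coeff (rep g) = r.coeff g := by
    intro g
    obtain ⟨z, hz'⟩ := hrep_spec g
    rw [← hz', hz]
  set v : MonoidAlgebra F Q :=
    MonoidAlgebra.ofCoeff (Finsupp.filter (fun g => rep g = g) r.coeff : Q →₀ F) with hvdef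
  have hv : ∀ a : Q, v.coeff a = if rep a = a then r.coeff a else 0 :=
    fun a => Finsupp.filter_apply _ r.coeff a
  refine ⟨v, ?_⟩
  ext g
  rw [Finset.sum_mul]
  rw [MonoidAlgebra.coeff_sum, Finsupp.finset_sum_apply]
  have hterm : ∀ t : ℕ, ((MonoidAlgebra.single (x ^ t) (1 : F)) * v).coeff g
      = v.coeff ((x ^ t)⁻¹ * g) := by
    intro t
    rw [MonoidAlgebra.coeff_single_mul_apply, one_mul]
  -- find t₀
  obtain ⟨z, hzg⟩ := hrep_spec g
  have hqz : (q : ℤ) ≠ 0 := by positivity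
  set t₀ : ℕ := ((-z) % (q : ℤ)).toNat with ht₀
  have ht₀lt : t₀ < q := by
    have := Int.emod_lt_of_pos (-z) (by exact_mod_cast hord : (0:ℤ) < q)
    omega
  have hxt₀ : x ^ t₀ = x ^ (-z : ℤ) := by
    rw [← zpow_natCast, ht₀, Int.toNat_of_nonneg (Int.emod_nonneg _ hqz), zpow_mod_orderOf]
  have hrepg : (x ^ t₀)⁻¹ * g = rep g := by
    rw [hxt₀, ← zpow_neg, neg_neg, hzg]
  rw [Finset.sum_eq_single t₀]
  · rw [hterm, hrepg, hv, if_pos, hrconst]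
    exact hrep_const (rep g) g (hrep_spec g)
  · intro t htmem htne
    rw [hterm, hv, if_neg]
    intro habs
    have h1 : rep ((x ^ t)⁻¹ * g) = rep g :=
      hrep_const _ _ ⟨-t, by rw [zpow_neg, zpow_natCast]⟩
    rw [habs, ← hrepg] at h1
    have h2 : x ^ t = x ^ t₀ := by
      have := mul_right_cancel h1
      exact inv_injective this
    exact htne (pow_injOn_Iio_orderOf (by simpa using Finset.mem_range.mp htmem)
      (by simpa using ht₀lt) h2)
  · intro habs
    exact absurd (Finset.mem_range.mpr ht₀lt) habs

lemma eq_zero_of_trivial_action {F : Type} [Field F] {Q : Type} [Group Q]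
    (p : ℕ) (hp : p.Prime) [CharP F p]
    (M : Type) [AddCommGroup M] [Module (MonoidAlgebra F Q) M]
    (hproj : Module.Projective (MonoidAlgebra F Q) M)
    (x : Q) (hx1 : x ≠ 1) (n : ℕ) (hxn : x ^ p ^ n = 1)
    (hact : ∀ m : M, (MonoidAlgebra.single x (1 : F) : MonoidAlgebra F Q) • m = m) :
    ∀ m : M, m = 0 := by
  set R := MonoidAlgebra F Q
  set q := orderOf x with hq
  have hdvd : q ∣ p ^ n := orderOf_dvd_of_pow_eq_one hxn
  have hqne : q ≠ 0 := fun h => by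
    rw [h] at hdvd
    exact (pow_ne_zero n hp.ne_zero) (Nat.eq_zero_of_zero_dvd hdvd)
  have hord : 0 < q := Nat.pos_of_ne_zero hqne
  have hqne1 : q ≠ 1 := fun h => hx1 (orderOf_eq_one_iff.mp h)
  obtain ⟨j, hjn, hqj⟩ := (Nat.dvd_prime_pow hp).mp hdvd
  have hj : j ≠ 0 := fun h => hqne1 (by rw [hqj, h, pow_zero])
  have hpq : p ∣ q := hqj ▸ dvd_pow_self p hj
  have hqF : (q : F) = 0 := (CharP.cast_eq_zero_iff F p q).mpr hpq
  -- all powers act trivially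
  have hact' : ∀ (t : ℕ) (m : M), (MonoidAlgebra.single (x ^ t) (1 : F) : R) • m = m := by
    intro t
    induction t with
    | zero => intro m; rw [pow_zero, ← MonoidAlgebra.one_def, one_smul]
    | succ t ih =>
      intro m
      have : (MonoidAlgebra.single (x ^ (t+1)) (1 : F) : R)
          = MonoidAlgebra.single x 1 * MonoidAlgebra.single (x ^ t) 1 := by
        rw [MonoidAlgebra.single_mul_single, one_mul, ← pow_succ']
      rw [this, mul_smul, ih, hact]
  set N : R := ∑ t ∈ Finset.range q, MonoidAlgebra.single (x ^ t) (1 : F) with hN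
  have hNzero : ∀ m : M, N • m = 0 := by
    intro m
    rw [hN, Finset.sum_smul]
    have : ∀ t ∈ Finset.range q, (MonoidAlgebra.single (x ^ t) (1 : F) : R) • m = m :=
      fun t _ => hact' t m
    rw [Finset.sum_congr rfl this, Finset.sum_const, Finset.card_range,
      ← Nat.cast_smul_eq_nsmul R]
    have : ((q : ℕ) : R) = 0 := by
      rw [← map_natCast (algebraMap F R) q, hqF, map_zero]
    rw [this, zero_smul]
  obtain ⟨s, hs⟩ := Module.projective_def.mp hproj
  intro m
  have hfix : (MonoidAlgebra.single x (1 : F) : R) • s m = s m := by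
    conv_rhs => rw [← hact m]
    rw [map_smul]
  have hcomp : ∀ i : M, (MonoidAlgebra.single x (1 : F) : R) * (s m) i = (s m) i := by
    intro i
    have := congrArg (fun f : M →₀ R => f i) hfix
    simpa [Finsupp.smul_apply, smul_eq_mul] using this
  have hcomp' : ∀ i : M, ∀ g : Q, ((s m) i).coeff (x⁻¹ * g) = ((s m) i).coeff g := by
    intro i g
    have := congrArg (fun f : R => f.coeff g) (hcomp i)
    simpa [MonoidAlgebra.coeff_single_mul_apply] using this
  have hex : ∀ i : M, ∃ v : R, N * v = (s m) i := fun i =>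
    exists_norm_mul_eq x hord ((s m) i) (hcomp' i)
  choose v hv using hex
  have := hs m
  rw [Finsupp.linearCombination_apply, Finsupp.sum] at this
  calc m = ∑ i ∈ (s m).support, (s m) i • (id i : M) := this.symm
    _ = ∑ i ∈ (s m).support, N • (v i • (i : M)) := by
        refine Finset.sum_congr rfl fun i _ => ?_
        rw [← hv i, mul_smul]; rfl
    _ = N • ∑ i ∈ (s m).support, v i • (i : M) := (Finset.smul_sum).symm
    _ = 0 := hNzero _

lemma rep_faithful_on_p_elements {F : Type} [Field F] {Q : Type} [Group Q]
    (p : ℕ) (hp : p.Prime) [CharP F p]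
    (M : Rep.{0} F Q) (hproj : Projective M) (hnz : ¬ IsZero M)
    (x : Q) (n : ℕ) (hxn : x ^ p ^ n = 1) (hact : ∀ v : M.V, M.ρ x v = v) : x = 1 := by
  by_contra hx1
  have h1 : Projective (Rep.equivalenceModuleMonoidAlgebra.functor.obj M) :=
    (Equivalence.map_projective_iff Rep.equivalenceModuleMonoidAlgebra M).mpr hproj
  have h2 : Module.Projective (MonoidAlgebra F Q) M.ρ.asModule :=
    (IsProjective.iff_projective _).mpr h1
  have h3 : ∀ m : M.ρ.asModule,
      (MonoidAlgebra.single x (1 : F) : MonoidAlgebra F Q) • m = m := by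
    intro m
    have h4 := Representation.asModuleEquiv_map_smul M.ρ
      (MonoidAlgebra.single x (1 : F)) m
    rw [Representation.asAlgebraHom_single_one] at h4
    have h5 : M.ρ.asModuleEquiv ((MonoidAlgebra.single x (1 : F) : MonoidAlgebra F Q) • m)
        = M.ρ.asModuleEquiv m := by rw [h4]; exact hact _
    exact M.ρ.asModuleEquiv.injective h5
  have hall := eq_zero_of_trivial_action p hp M.ρ.asModule h2 x hx1 n hxn h3
  apply hnz
  rw [Rep.isZero_iff]
  exact ⟨fun a b => (hall a).trans (hall b).symm⟩

lemma triv_of_iso {F : Type} [Field F] {G : Type} [Group G]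
    (K K' : Subgroup G) [K.Normal] [K'.Normal]
    (F₀ : Rep.{0} F (G ⧸ K)) (F₀' : Rep.{0} F (G ⧸ K'))
    (e : (Rep.res (QuotientGroup.mk' K) F₀ : Rep.{0} F G) ≅
        Rep.res (QuotientGroup.mk' K') F₀')
    (g : G) (hg : g ∈ K') (v : F₀.V) : F₀.ρ (QuotientGroup.mk g) v = v := by
  set A : Rep.{0} F G := Rep.res (QuotientGroup.mk' K) F₀
  set A' : Rep.{0} F G := Rep.res (QuotientGroup.mk' K') F₀'
  have hg1 : (QuotientGroup.mk g : G ⧸ K') = 1 := (QuotientGroup.eq_one_iff g).mpr hg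
  have hinv : ∀ w : F₀.V, e.inv.hom (e.hom.hom w) = w := by
    intro w
    exact Rep.inv_hom_apply (e := e) (x := w)
  have h3 := Rep.hom_comm_apply e.hom g v
  have hr1 : A'.ρ g (e.hom.hom v) = e.hom.hom v := by
    show F₀'.ρ (QuotientGroup.mk g) (e.hom.hom v) = e.hom.hom v
    rw [hg1, map_one]
    rfl
  have h4 : e.hom.hom (A.ρ g v) = e.hom.hom v := by rw [h3, hr1]
  have h5 := congrArg e.inv.hom h4
  rw [hinv, hinv] at h5
  exact h5

lemma le_of_triv {F : Type} [Field F] {G : Type} [Group G]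
    (p : ℕ) (hp : p.Prime) [CharP F p]
    (K₁ K₂ : Subgroup G) [K₁.Normal] (hK₂ : IsPResidueFree p K₂)
    (M : Rep.{0} F (G ⧸ K₁)) (hnz : ¬ IsZero M) (hproj : Projective M)
    (htriv : ∀ g ∈ K₂, ∀ v : M.V, M.ρ (QuotientGroup.mk g) v = v) : K₂ ≤ K₁ := by
  have key : ∀ x : K₂, (∃ n : ℕ, x ^ p ^ n = 1) → (x : G) ∈ K₁ := by
    rintro x ⟨n, hn⟩
    have hcoe : (x : G) ^ p ^ n = 1 := by exact_mod_cast congrArg Subtype.val hn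
    have hy : ((QuotientGroup.mk' K₁) (x : G)) ^ p ^ n = 1 := by
      rw [← map_pow, hcoe, map_one]
    have h1 : ((QuotientGroup.mk' K₁) (x : G)) = 1 :=
      rep_faithful_on_p_elements p hp M hproj hnz _ n hy (htriv (x : G) x.2)
    exact (QuotientGroup.eq_one_iff _).mp h1
  intro g hg
  have hx : (⟨g, hg⟩ : K₂) ∈ Subgroup.closure {x : K₂ | ∃ n : ℕ, x ^ p ^ n = 1} :=
    hK₂ ▸ Subgroup.mem_top _
  exact Subgroup.closure_induction (p := fun (y : K₂) _ => (y : G) ∈ K₁)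
    (fun y hy => key y hy) (by simpa using K₁.one_mem)
    (fun a b _ _ ha hb => by simpa using K₁.mul_mem ha hb)
    (fun a _ ha => by simpa using K₁.inv_mem ha) hx

/-- if `K, K'` are `p'`-residue-free normal subgroups of `G` and `F₀, F₀'`
are indecomposable projective modules over `F[G/K]`, `F[G/K']` respectively whose
inflations to `G` are isomorphic, then `K = K'` and `F₀ ≅ F₀'` (after transporting
`F₀'` along the equality `K = K'`). -/
theorem stmt2 (p : ℕ) (hp : p.Prime) (F : Type) [Field F] [IsAlgClosed F] [CharP F p]
    (G : Type) [Group G] [Finite G] (K K' : Subgroup G) [K.Normal] [K'.Normal]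
    (hK : IsPResidueFree p K) (hK' : IsPResidueFree p K')
    (F₀ : Rep.{0} F (G ⧸ K)) (F₀' : Rep.{0} F (G ⧸ K'))
    (hF₀ : RepIndecomposable F₀ ∧ Projective F₀)
    (hF₀' : RepIndecomposable F₀' ∧ Projective F₀')
    (hiso : Nonempty
      ((Rep.res (QuotientGroup.mk' K) F₀ : Rep.{0} F G) ≅
        Rep.res (QuotientGroup.mk' K') F₀')) :
    ∃ h : K = K', Nonempty (F₀ ≅
      Rep.res
        (QuotientGroup.quotientMulEquivOfEq h).toMonoidHom F₀') := by
  obtain ⟨e⟩ := hiso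
  have h1 : K' ≤ K :=
    le_of_triv p hp K K' hK' F₀ hF₀.1.1 hF₀.2
      (fun g hg v => triv_of_iso K K' F₀ F₀' e g hg v)
  have h2 : K ≤ K' :=
    le_of_triv p hp K' K hK F₀' hF₀'.1.1 hF₀'.2
      (fun g hg v => triv_of_iso K' K F₀' F₀ e.symm g hg v)
  have h : K = K' := le_antisymm h2 h1
  subst h
  refine ⟨rfl, ⟨Rep.mkIso (Representation.Equiv.mk (LinearEquiv.ofLinear
    e.hom.hom.toLinearMap e.inv.hom.toLinearMap ?_ ?_) ?_)⟩⟩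
  · ext w; exact Rep.hom_inv_apply (e := e) (x := w)
  · ext w; exact Rep.inv_hom_apply (e := e) (x := w)
  intro q
  induction q using QuotientGroup.induction_on with
  | H g => ext w; exact Rep.hom_comm_apply e.hom g w
end

section
/- Let p be a prime, F a field of characteristic p, H a finite group, and N a normal subgroup of H whose order is coprime to p. Let M be a finite-dimensional F[H]-module on which N acts trivially, regarded also as an F[H/N]-module. Then M is projective as an F[H]-module if and only if M is projective as an F[H/N]-module. -/
open CategoryTheory Limits

namespace Stmt4Aux

variable {F : Type} [Field F] {H : Type} [Group H] (N : Subgroup H) [N.Normal]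

lemma rep_epi_surj {G : Type} [Group G] {X Y : Rep F G} (e : X ⟶ Y) [Epi e] :
    Function.Surjective e.hom := by
  exact (Rep.epi_iff_surjective e).1 inferInstance

lemma rep_epi_of_surj {G : Type} [Group G] {X Y : Rep F G} (e : X ⟶ Y)
    (h : Function.Surjective e.hom) : Epi e := by
  exact (Rep.epi_iff_surjective e).2 h

/-- the `N`-invariants of `X`, as a submodule. -/
def invSub (X : Rep F H) : Submodule F X.V where
  carrier := {v | ∀ n ∈ N, X.ρ n v = v}
  add_mem' := fun {a b} ha hb n hn => by simp only [map_add, ha n hn, hb n hn]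
  zero_mem' := fun n hn => map_zero _
  smul_mem' := fun c v hv n hn => by simp only [map_smul, hv n hn]

omit [N.Normal] in
lemma mem_invSub {X : Rep F H} {v : X.V} :
    v ∈ invSub N X ↔ ∀ n ∈ N, X.ρ n v = v := Iff.rfl

lemma ρ_mapsTo (X : Rep F H) (h : H) :
    ∀ v ∈ invSub N X, X.ρ h v ∈ invSub N X := by
  intro v hv n hn
  have hmem : h⁻¹ * n * h ∈ N := by
    have := Subgroup.Normal.conj_mem ‹N.Normal› n hn h⁻¹
    simpa using this
  calc X.ρ n (X.ρ h v) = X.ρ (n * h) v := by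
        rw [map_mul]; rfl
    _ = X.ρ (h * (h⁻¹ * n * h)) v := by group
    _ = X.ρ h (X.ρ (h⁻¹ * n * h) v) := by rw [map_mul]; rfl
    _ = X.ρ h v := by rw [hv _ hmem]

/-- action of `H` on the invariants. -/
noncomputable def repH (X : Rep F H) : Representation F H (invSub N X) where
  toFun h := (X.ρ h).restrict (ρ_mapsTo N X h)
  map_one' := by
    apply LinearMap.ext; rintro ⟨v, hv⟩
    apply Subtype.ext
    show X.ρ 1 v = v
    simp
  map_mul' := fun a b => by
    apply LinearMap.ext; rintro ⟨v, hv⟩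
    apply Subtype.ext
    show X.ρ (a * b) v = X.ρ a (X.ρ b v)
    simp [map_mul]

lemma repH_coe (X : Rep F H) (h : H) (v : invSub N X) :
    (repH N X h v : X.V) = X.ρ h (v : X.V) := rfl

lemma repH_triv (X : Rep F H) {n : H} (hn : n ∈ N) : repH N X n = 1 := by
  apply LinearMap.ext; rintro ⟨v, hv⟩
  exact Subtype.ext (hv n hn)

/-- the induced representation of `H ⧸ N` on the invariants. -/
noncomputable def repQ (X : Rep F H) : Representation F (H ⧸ N) (invSub N X) where
  toFun := fun q => Quotient.liftOn' q (fun h => repH N X h) (by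
    intro a b hab
    have hn : a⁻¹ * b ∈ N := QuotientGroup.leftRel_apply.1 hab
    show repH N X a = repH N X b
    have : repH N X b = repH N X (a * (a⁻¹ * b)) := by group
    rw [this, map_mul, repH_triv N X hn, mul_one])
  map_one' := repH N X |>.map_one
  map_mul' := fun a b => by
    induction a using QuotientGroup.induction_on with
    | H a =>
    induction b using QuotientGroup.induction_on with
    | H b =>
    show repH N X (a * b) = repH N X a * repH N X b
    exact map_mul _ _ _

lemma repQ_mk (X : Rep F H) (h : H) :
    repQ N X ((h : H ⧸ N)) = repH N X h := rfl

/-- the invariants as a `Rep F (H ⧸ N)`. -/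
noncomputable def invRep (X : Rep F H) : Rep F (H ⧸ N) := Rep.of (repQ N X)

lemma invRep_ρ (X : Rep F H) : (invRep N X).ρ = repQ N X := rfl


noncomputable def invMap {X Y : Rep F H} (e : X ⟶ Y) : invRep N X ⟶ invRep N Y := Rep.ofHom
  { toLinearMap := e.hom.toLinearMap.restrict (fun v hv => by
    intro n hn
    show Y.ρ n (e.hom v) = e.hom v
    rw [← Rep.hom_comm_apply e n v, hv n hn])
    isIntertwining' := fun q => by
      induction q using QuotientGroup.induction_on with
      | H h =>
        apply LinearMap.ext; rintro ⟨v, hv⟩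
        apply Subtype.ext
        show e.hom (X.ρ h v) = Y.ρ h (e.hom v)
        exact Rep.hom_comm_apply e h v }

end Stmt4Aux

/-- let `F` have characteristic `p`, `N ⊴ H` with `|N|` coprime to `p`,
and let `M` be a finite-dimensional `F[H/N]`-module (equivalently, an `F[H]`-module on
which `N` acts trivially).  Then the inflation of `M` to `H` is projective as an
`F[H]`-module if and only if `M` is projective as an `F[H/N]`-module. -/
theorem stmt4 (p : ℕ) (hp : p.Prime) (F : Type) [Field F] [CharP F p]
    (H : Type) [Group H] [Finite H] (N : Subgroup H) [N.Normal]
    (hN : Nat.Coprime (Nat.card N) p)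
    (M : Rep.{0} F (H ⧸ N)) [FiniteDimensional F M.V] :
    Projective ((Rep.resFunctor (QuotientGroup.mk' N)).obj M) ↔
      Projective M := by
  set R := Rep.resFunctor (k := F) (QuotientGroup.mk' N) with hR
  constructor
  · -- inflation projective → projective
    intro hP
    constructor
    intro E X f e he
    have hs : Function.Surjective e.hom := Stmt4Aux.rep_epi_surj e
    haveI : Epi (R.map e) := Stmt4Aux.rep_epi_of_surj (R.map e) hs
    haveI := hP
    obtain ⟨g, hg⟩ := Projective.factors (R.map f) (R.map e)
    refine ⟨Rep.ofHom ⟨g.hom.toLinearMap, fun q => ?_⟩, ?_⟩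
    · induction q using QuotientGroup.induction_on with
      | H h => exact g.hom.isIntertwining' h
    · have h4 := congrArg (fun φ => φ.hom.toLinearMap) hg
      exact Rep.hom_ext (Representation.IntertwiningMap.ext h4)
  · -- projective → inflation projective
    intro hM
    constructor
    intro E X f e he
    haveI : Fintype ↥N := Fintype.ofFinite _
    have hs : Function.Surjective e.hom := Stmt4Aux.rep_epi_surj e
    have hcard : (Nat.card ↥N : F) ≠ 0 := by
      have hnd : ¬ p ∣ Nat.card ↥N := (Nat.Prime.coprime_iff_not_dvd hp).1 hN.symm
      simpa [CharP.cast_eq_zero_iff F p] using hnd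
    -- f lands in the invariants of X
    have hf : ∀ m, f.hom m ∈ Stmt4Aux.invSub N X := by
      intro m n hn
      have h1 : ((QuotientGroup.mk' N) n) = (1 : H ⧸ N) := (QuotientGroup.eq_one_iff n).2 hn
      have h2 := Rep.hom_comm_apply f n m
      rw [show (Rep.ρ (R.obj M) n) m = m from by
        show (M.ρ ((QuotientGroup.mk' N) n)) m = m
        rw [h1, map_one, Module.End.one_apply]] at h2
      exact h2.symm
    let f' : M ⟶ Stmt4Aux.invRep N X := Rep.ofHom
      { toLinearMap := LinearMap.codRestrict (Stmt4Aux.invSub N X) f.hom.toLinearMap hf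
        isIntertwining' := fun q => by
          induction q using QuotientGroup.induction_on with
          | H h =>
            apply LinearMap.ext; intro m
            apply Subtype.ext
            show f.hom (Rep.ρ M ((h : H ⧸ N)) m) = Rep.ρ X h (f.hom m)
            exact Rep.hom_comm_apply f h m }
    let e' := Stmt4Aux.invMap N e
    haveI he' : Epi e' := by
      apply Stmt4Aux.rep_epi_of_surj
      rintro ⟨x, hx⟩
      obtain ⟨v, hv⟩ := hs x
      refine ⟨⟨(Nat.card ↥N : F)⁻¹ • ∑ n : ↥N, Rep.ρ E (n : H) v, ?_⟩, ?_⟩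
      · intro n₀ hn₀
        rw [map_smul, map_sum]
        congr 1
        refine Fintype.sum_equiv (Equiv.mulLeft (⟨n₀, hn₀⟩ : ↥N)) _ _ (fun n => ?_)
        show Rep.ρ E n₀ (Rep.ρ E (n : H) v) = Rep.ρ E (((⟨n₀, hn₀⟩ : ↥N) * n : ↥N) : H) v
        rw [Subgroup.coe_mul, map_mul, Module.End.mul_apply]
      · apply Subtype.ext
        show e.hom ((Nat.card ↥N : F)⁻¹ • ∑ n : ↥N, Rep.ρ E (n : H) v) = x
        rw [map_smul, map_sum]
        have hterm : ∀ n : ↥N, e.hom (Rep.ρ E (n : H) v) = x := fun n => by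
          rw [Rep.hom_comm_apply e (n : H) v, hv, hx (n : H) n.2]
        rw [Finset.sum_congr rfl (fun n _ => hterm n), Finset.sum_const, Finset.card_univ,
          ← Nat.card_eq_fintype_card, ← Nat.cast_smul_eq_nsmul F, smul_smul,
          inv_mul_cancel₀ hcard, one_smul]
    haveI := hM
    obtain ⟨g, hg⟩ := Projective.factors f' e'
    refine ⟨Rep.ofHom ⟨(Stmt4Aux.invSub N E).subtype.comp g.hom.toLinearMap, fun h => ?_⟩, ?_⟩
    · apply LinearMap.ext; intro m
      exact congrArg Subtype.val (Rep.hom_comm_apply g ((h : H ⧸ N)) m)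
    · apply Rep.hom_ext
      apply Representation.IntertwiningMap.ext
      apply LinearMap.ext; intro m
      have h3 := LinearMap.congr_fun (congrArg (fun φ => φ.hom.toLinearMap) hg) m
      exact congrArg Subtype.val h3
end

section
/- Let p be a prime, F an algebraically closed field of characteristic p, and G a finite group. If X and Y are finite-dimensional exprojective F[G]-modules, then the F[G]-module X ⊗_F Y, with G acting diagonally, is exprojective. -/
open CategoryTheory Limits MonoidalCategory

/-- `M` is (isomorphic to) a direct summand of `N`, i.e. a retract of `N`. -/
def IsDirectSummand {C : Type*} [Category C] (M N : C) : Prop :=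
  ∃ (i : M ⟶ N) (r : N ⟶ M), i ≫ r = 𝟙 M

instance {F : Type} [Field F] {G : Type} [Group G] : HasFiniteBiproducts (Rep F G) :=
  HasFiniteBiproducts.of_hasFiniteProducts

/-- A representation is exprojective if it is isomorphic to a direct summand of a
finite direct sum of permutation modules `F[G/K]` with each `K` normal in `G`. -/
def Exprojective {F : Type} [Field F] {G : Type} [Group G] (M : Rep F G) : Prop :=
  ∃ (n : ℕ) (K : Fin n → Subgroup G), (∀ i, (K i).Normal) ∧
    IsDirectSummand M (⨁ fun i => Rep.ofMulAction F G (G ⧸ K i))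

open MulAction

variable {F : Type} [Field F] {G : Type} [Group G]
variable {S : Type} [MulAction G S] (N : Subgroup G)

def toF (s : S) (hN : N ≤ stabilizer G s) : G ⧸ N → S :=
  fun x => Quotient.liftOn' x (fun g => g • s) (by
    intro a b h
    rw [QuotientGroup.leftRel_apply] at h
    have h2 : (a⁻¹ * b) • s = s := hN h
    calc a • s = a • ((a⁻¹ * b) • s) := by rw [h2]
    _ = b • s := by rw [smul_smul, mul_inv_cancel_left])

@[simp] lemma toF_mk (s : S) (hN : N ≤ stabilizer G s) (g : G) :
    toF N s hN (g : G ⧸ N) = g • s := rfl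

lemma toF_equivariant (s : S) (hN : N ≤ stabilizer G s) (g : G) (x : G ⧸ N) :
    toF N s hN (g • x) = g • toF N s hN x := by
  induction x using QuotientGroup.induction_on with
  | H a => show toF N s hN ((g * a : G) : G ⧸ N) = _
           rw [toF_mk, toF_mk, mul_smul]


noncomputable def qHom (s : S) (hN : N ≤ stabilizer G s) :
    Rep.ofMulAction F G (G ⧸ N) ⟶ Rep.ofMulAction F G S := Rep.ofHom
  { toLinearMap := MonoidAlgebra.mapDomainLinearMap F F (toF N s hN)
    isIntertwining' := by
      intro g
      apply MonoidAlgebra.lhom_ext'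
      intro x
      apply LinearMap.ext_ring
      show MonoidAlgebra.mapDomainLinearMap F F (toF N s hN) ((Rep.ofMulAction F G (G ⧸ N)).ρ g (MonoidAlgebra.single x 1)) = (Rep.ofMulAction F G S).ρ g (MonoidAlgebra.mapDomainLinearMap F F (toF N s hN) (MonoidAlgebra.single x 1))
      simp [Representation.ofMulAction_single, toF_equivariant] }

variable (F) in
open Classical in
noncomputable def pV (s : S) : S → (G ⧸ N →₀ F) :=
  fun t => if h : t ∈ orbit G s then Finsupp.single ((mem_orbit_iff.mp h).choose : G ⧸ N) 1 else 0

lemma pV_eq (s : S) (hs : stabilizer G s ≤ N) (g : G) (t : S) (hg : g • s = t) :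
    pV F N s t = Finsupp.single ((g : G ⧸ N)) 1 := by
  have h : t ∈ orbit G s := ⟨g, hg⟩
  rw [pV, dif_pos h]
  congr 1
  have hc : (mem_orbit_iff.mp h).choose • s = t := (mem_orbit_iff.mp h).choose_spec
  rw [QuotientGroup.eq]
  apply hs
  rw [mem_stabilizer_iff, mul_smul, hg]
  exact inv_smul_eq_iff.mpr hc.symm

lemma pV_zero (s : S) (t : S) (h : t ∉ orbit G s) : pV F N s t = 0 := by
  rw [pV, dif_neg h]

lemma pV_equivariant (s : S) (hs : stabilizer G s ≤ N) (g : G) (t : S) :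
    pV F N s (g • t) = Finsupp.lmapDomain F F (fun x : G ⧸ N => g • x) (pV F N s t) := by
  by_cases h : t ∈ orbit G s
  · obtain ⟨w, hw⟩ := h
    simp only at hw
    rw [pV_eq N s hs w t hw, pV_eq N s hs (g * w) (g • t) (by rw [mul_smul, hw])]
    rw [Finsupp.lmapDomain_apply, Finsupp.mapDomain_single]
    rfl
  · rw [pV_zero N s t h, pV_zero N s (g • t) (fun hmem => h ?_), map_zero]
    obtain ⟨w, hw⟩ := hmem
    exact ⟨g⁻¹ * w, by simp only at hw ⊢; rw [mul_smul, hw, inv_smul_smul]⟩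

noncomputable def pHom (s : S) (hs : stabilizer G s ≤ N) :
    Rep.ofMulAction F G S ⟶ Rep.ofMulAction F G (G ⧸ N) := Rep.ofHom
  { toLinearMap := (MonoidAlgebra.coeffLinearEquiv F).symm.toLinearMap ∘ₗ
      Finsupp.linearCombination F (pV F N s) ∘ₗ (MonoidAlgebra.coeffLinearEquiv F).toLinearMap
    isIntertwining' := by
      intro g
      apply MonoidAlgebra.lhom_ext'
      intro t
      apply LinearMap.ext_ring
      show MonoidAlgebra.ofCoeff (Finsupp.linearCombination F (pV F N s) (Representation.ofMulAction F G S (g : G) (MonoidAlgebra.single t 1)).coeff) = Representation.ofMulAction F G (G ⧸ N) (g : G) (MonoidAlgebra.ofCoeff (Finsupp.linearCombination F (pV F N s) (MonoidAlgebra.single t 1).coeff))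
      rw [Representation.ofMulAction_single]
      simp only [MonoidAlgebra.coeff_single, Finsupp.linearCombination_single, one_smul]
      rw [pV_equivariant N s hs (g : G) t]
      rfl }

open Classical in
lemma pq_single (s : S) (h : stabilizer G s = N) (t : S) (r : F) :
    (pHom N s h.le ≫ qHom N s h.ge).hom (MonoidAlgebra.single t r)
      = if t ∈ orbit G s then MonoidAlgebra.single t r else 0 := by
  rw [Rep.hom_comp]
  show (qHom N s h.ge).hom ((pHom N s h.le).hom (MonoidAlgebra.single t r)) = _
  show MonoidAlgebra.mapDomainLinearMap F F (toF N s h.ge) (MonoidAlgebra.ofCoeff (Finsupp.linearCombination F (pV F N s) (Finsupp.single t r))) = _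
  rw [Finsupp.linearCombination_single]
  by_cases hmem : t ∈ orbit G s
  · obtain ⟨w, hw⟩ := hmem
    simp only at hw
    rw [pV_eq N s h.le w t hw, if_pos ⟨w, hw⟩, Finsupp.smul_single, smul_eq_mul, mul_one,
      MonoidAlgebra.ofCoeff_single, MonoidAlgebra.mapDomainLinearMap_single, toF_mk, hw]
  · rw [pV_zero N s t hmem, if_neg hmem, smul_zero]
    exact map_zero _

open Classical in
lemma perm_summand [Finite S] (hstab : ∀ s : S, stabilizer G s = N) :
    IsDirectSummand (Rep.ofMulAction F G S)
      (⨁ fun _ : orbitRel.Quotient G S => Rep.ofMulAction F G (G ⧸ N)) := by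
  have : Fintype (orbitRel.Quotient G S) := Fintype.ofFinite _
  refine ⟨biproduct.lift fun ω => pHom N (Quotient.out ω) (hstab _).le,
          biproduct.desc fun ω => qHom N (Quotient.out ω) (hstab _).ge, ?_⟩
  rw [biproduct.lift_desc]
  apply Rep.hom_ext
  rw [Rep.sum_hom]
  apply Representation.IntertwiningMap.ext
  apply MonoidAlgebra.lhom_ext'
  intro t
  apply LinearMap.ext_ring
  simp only [LinearMap.comp_apply, MonoidAlgebra.lsingle_apply]
  rw [Representation.IntertwiningMap.toLinearMap_sum, LinearMap.coe_sum, Finset.sum_apply]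
  have key : ∀ ω : orbitRel.Quotient G S,
      (pHom N (Quotient.out ω) (hstab _).le ≫ qHom N (Quotient.out ω) (hstab _).ge).hom
        (MonoidAlgebra.single t (1 : F)) = if ω = Quotient.mk'' t then MonoidAlgebra.single t (1 : F) else 0 := by
    intro ω
    rw [pq_single N _ (hstab _)]
    congr 1
    rw [← orbitRel.Quotient.orbit_eq_orbit_out ω Quotient.out_eq']
    rw [eq_iff_iff, orbitRel.Quotient.mem_orbit, eq_comm]
  trans (∑ ω : orbitRel.Quotient G S, if ω = Quotient.mk'' t then MonoidAlgebra.single t (1 : F) else 0)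
  · exact Finset.sum_congr rfl fun ω _ => key ω
  · rw [Finset.sum_ite_eq' Finset.univ (Quotient.mk'' t) (fun _ => MonoidAlgebra.single t (1 : F)),
      if_pos (Finset.mem_univ _)]
    rfl

lemma stab_quot (K : Subgroup G) [hK : K.Normal] (x : G ⧸ K) : stabilizer G x = K := by
  induction x using QuotientGroup.induction_on with
  | H a =>
    ext g
    rw [mem_stabilizer_iff]
    show ((g * a : G) : G ⧸ K) = (a : G ⧸ K) ↔ g ∈ K
    rw [QuotientGroup.eq]
    constructor
    · intro h
      have h2 := hK.conj_mem _ h a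
      have : a * ((g * a)⁻¹ * a) * a⁻¹ = g⁻¹ := by group
      rw [this] at h2
      simpa using h2
    · intro h
      have : (g * a)⁻¹ * a = a⁻¹ * g⁻¹ * a := by group
      rw [this]
      exact hK.conj_mem' _ (by simpa using h) a

lemma stab_pair (K L : Subgroup G) [K.Normal] [L.Normal] (s : (G ⧸ K) × (G ⧸ L)) :
    stabilizer G s = K ⊓ L := by
  ext g
  rw [mem_stabilizer_iff]
  obtain ⟨x, y⟩ := s
  rw [Prod.smul_def, Prod.mk.injEq, Subgroup.mem_inf, ← mem_stabilizer_iff, ← mem_stabilizer_iff,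
    stab_quot K x, stab_quot L y]

section Summand
variable {C : Type*} [Category C]

lemma IsDirectSummand.trans' {M N P : C} (h1 : IsDirectSummand M N) (h2 : IsDirectSummand N P) :
    IsDirectSummand M P := by
  obtain ⟨i1, r1, h1⟩ := h1
  obtain ⟨i2, r2, h2⟩ := h2
  exact ⟨i1 ≫ i2, r2 ≫ r1, by rw [Category.assoc, ← Category.assoc i2, h2, Category.id_comp, h1]⟩

lemma IsDirectSummand.of_iso {M N P : C} (e : N ≅ P) (h : IsDirectSummand M N) :
    IsDirectSummand M P :=
  h.trans' ⟨e.hom, e.inv, e.hom_inv_id⟩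

lemma IsDirectSummand.of_iso_left {M M' N : C} (e : M' ≅ M) (h : IsDirectSummand M' N) :
    IsDirectSummand M N :=
  IsDirectSummand.trans' ⟨e.inv, e.hom, e.inv_hom_id⟩ h

lemma IsDirectSummand.tensor [MonoidalCategory C] {M N M' N' : C}
    (h1 : IsDirectSummand M N) (h2 : IsDirectSummand M' N') :
    IsDirectSummand (M ⊗ M') (N ⊗ N') := by
  obtain ⟨i1, r1, h1⟩ := h1
  obtain ⟨i2, r2, h2⟩ := h2
  exact ⟨i1 ⊗ₘ i2, r1 ⊗ₘ r2, by rw [tensorHom_comp_tensorHom, h1, h2, id_tensorHom_id]⟩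

lemma IsDirectSummand.biproduct [Preadditive C] [HasFiniteBiproducts C] {J : Type} [Finite J]
    {f g : J → C} (h : ∀ j, IsDirectSummand (f j) (g j)) :
    IsDirectSummand (⨁ f) (⨁ g) := by
  choose i r hir using h
  refine ⟨biproduct.map i, biproduct.map r, ?_⟩
  ext j
  simp [biproduct.map_π, biproduct.map_π_assoc, hir j]

end Summand

noncomputable def tensIso (F : Type) [Field F] (G : Type) [Group G] (A B : Type)
    [MulAction G A] [MulAction G B] :
    Rep.ofMulAction F G A ⊗ Rep.ofMulAction F G B ≅ Rep.ofMulAction F G (A × B) :=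
  Functor.Monoidal.μIso (Rep.linearization F G) (Action.ofMulAction G A) (Action.ofMulAction G B)

/-- the tensor product (over `F`, with diagonal `G`-action) of two
finite-dimensional exprojective `F[G]`-modules is exprojective. -/
theorem stmt5 (p : ℕ) (hp : p.Prime) (F : Type) [Field F] [IsAlgClosed F] [CharP F p]
    (G : Type) [Group G] [Finite G] (X Y : Rep F G)
    [FiniteDimensional F X.V] [FiniteDimensional F Y.V]
    (hX : Exprojective X) (hY : Exprojective Y) :
    Exprojective (X ⊗ Y) := by
  classical
  obtain ⟨n, K, hK, hXs⟩ := hX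
  obtain ⟨m, L, hL, hYs⟩ := hY
  have pair : ∀ σ : Σ _ : Fin n, Fin m, IsDirectSummand
      (Rep.ofMulAction F G (G ⧸ K σ.1) ⊗ Rep.ofMulAction F G (G ⧸ L σ.2))
      (⨁ fun _ : orbitRel.Quotient G ((G ⧸ K σ.1) × (G ⧸ L σ.2)) =>
        Rep.ofMulAction F G (G ⧸ (K σ.1 ⊓ L σ.2))) := by
    intro σ
    have h1 := hK σ.1
    have h2 := hL σ.2
    refine IsDirectSummand.of_iso_left (tensIso F G _ _).symm ?_
    exact perm_summand (K σ.1 ⊓ L σ.2) (fun s => stab_pair _ _ s)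
  have step1 : IsDirectSummand (X ⊗ Y)
      ((⨁ fun i => Rep.ofMulAction F G (G ⧸ K i)) ⊗ (⨁ fun j => Rep.ofMulAction F G (G ⧸ L j))) :=
    hXs.tensor hYs
  have e1 : ((⨁ fun i => Rep.ofMulAction F G (G ⧸ K i)) ⊗ (⨁ fun j => Rep.ofMulAction F G (G ⧸ L j)))
      ≅ ⨁ fun σ : Σ _ : Fin n, Fin m => Rep.ofMulAction F G (G ⧸ K σ.1) ⊗ Rep.ofMulAction F G (G ⧸ L σ.2) :=
    rightDistributor _ _ ≪≫ biproduct.mapIso (fun i => leftDistributor _ _) ≪≫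
      biproductBiproductIso _ _
  have step2 := (step1.of_iso e1).trans' (IsDirectSummand.biproduct pair)
  have e2 := biproductBiproductIso (C := Rep F G)
      (fun σ : Σ _ : Fin n, Fin m => orbitRel.Quotient G ((G ⧸ K σ.1) × (G ⧸ L σ.2)))
      (fun σ _ => Rep.ofMulAction F G (G ⧸ (K σ.1 ⊓ L σ.2)))
  have step3 := step2.of_iso e2
  have : Fintype (Σ σ : Σ _ : Fin n, Fin m, orbitRel.Quotient G ((G ⧸ K σ.1) × (G ⧸ L σ.2))) :=
    Fintype.ofFinite _
  set J := Σ σ : Σ _ : Fin n, Fin m, orbitRel.Quotient G ((G ⧸ K σ.1) × (G ⧸ L σ.2)) with hJ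
  refine ⟨Fintype.card J, fun x => K ((Fintype.equivFin J).symm x).1.1 ⊓ L ((Fintype.equivFin J).symm x).1.2,
    fun x => ?_, ?_⟩
  · have := hK ((Fintype.equivFin J).symm x).1.1
    have := hL ((Fintype.equivFin J).symm x).1.2
    infer_instance
  · refine step3.of_iso (biproduct.whiskerEquiv (Fintype.equivFin J) (fun τ => eqToIso ?_))
    exact congrArg (fun s : J => Rep.ofMulAction F G (G ⧸ (K s.1.1 ⊓ L s.1.2)))
      (Equiv.symm_apply_apply (Fintype.equivFin J) τ)
end

section
/- Let p be a prime, F a field of characteristic p, H a finite group, and M a nonzero finite-dimensional projective F[H]-module. Then the kernel of the associated representation, i.e. the subgroup of all elements of H that act as the identity on M, has order coprime to p. -/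
open CategoryTheory Limits

/-- The kernel of a representation: the subgroup of elements acting as the identity. -/
def repKer {F : Type} [Field F] {G : Type} [Group G] (M : Rep F G) : Subgroup G where
  carrier := {g : G | M.ρ g = 1}
  one_mem' := by simp
  mul_mem' := by
    intro a b ha hb
    simp only [Set.mem_setOf_eq] at *
    rw [map_mul, ha, hb, one_mul]
  inv_mem' := by
    intro a ha
    simp only [Set.mem_setOf_eq] at *
    have : M.ρ a⁻¹ * M.ρ a = 1 := by rw [← map_mul, inv_mul_cancel, map_one]
    rwa [ha, mul_one] at this

open MonoidAlgebra in
/-- An element of the group algebra fixed by left multiplication by `g` (of order `p`)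
is a multiple of the "norm" element `∑ i < p, g ^ i`. -/
lemma fixed_eq_norm_mul {F : Type} [Field F] {H : Type} [Group H] [Finite H] {g : H} {p : ℕ}
    (hppos : 0 < p) (hg : orderOf g = p) (a : MonoidAlgebra F H)
    (ha : single g (1 : F) * a = a) :
    ∃ b, a = (∑ i ∈ Finset.range p, single (g ^ i) (1 : F)) * b := by
  classical
  -- invariance under all powers of `g`
  have hinv : ∀ n : ℕ, single (g ^ n) (1 : F) * a = a := by
    intro n
    induction n with
    | zero => simp [MonoidAlgebra.one_def.symm]
    | succ n ih =>
      have h1 : single (g ^ (n + 1)) (1 : F) = single (g ^ n) 1 * single g 1 := by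
        rw [MonoidAlgebra.single_mul_single, one_mul, pow_succ]
      rw [h1, mul_assoc, ha, ih]
  set s : Setoid H := QuotientGroup.rightRel (Subgroup.zpowers g) with hsdef
  let r : H → H := fun h => (Quotient.mk s h).out
  have hrK : ∀ h, ∃ k : ℕ, g ^ k = h * (r h)⁻¹ := by
    intro h
    have h1 : s.r (r h) h := Quotient.exact (Quotient.out_eq _)
    rw [hsdef, QuotientGroup.rightRel_apply] at h1
    rw [← mem_powers_iff_mem_zpowers, Submonoid.mem_powers_iff] at h1
    exact h1
  have hr_const : ∀ i : ℕ, ∀ h : H, r ((g ^ i)⁻¹ * h) = r h := by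
    intro i h
    have : Quotient.mk s ((g ^ i)⁻¹ * h) = Quotient.mk s h := by
      apply Quotient.sound
      rw [hsdef]
      show Setoid.r _ _
      rw [QuotientGroup.rightRel_apply]
      have : h * ((g ^ i)⁻¹ * h)⁻¹ = g ^ i := by group
      rw [this]
      exact Subgroup.pow_mem _ (Subgroup.mem_zpowers g) i
    simp only [r, this]
  let b : MonoidAlgebra F H := MonoidAlgebra.ofCoeff (a.coeff.filter fun h => r h = h)
  refine ⟨b, ?_⟩
  ext h
  obtain ⟨k, hk⟩ := hrK h
  have hrh : (g ^ k)⁻¹ * h = r h := by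
    rw [hk]; group
  have ha_rh : a.coeff (r h) = a.coeff h := by
    conv_rhs => rw [← hinv k]
    rw [MonoidAlgebra.coeff_single_mul_apply, one_mul, hrh]
  rw [Finset.sum_mul, MonoidAlgebra.coeff_sum, Finsupp.finset_sum_apply]
  have hterm : ∀ i : ℕ, (single (g ^ i) (1 : F) * b).coeff h
      = if (g ^ i)⁻¹ * h = r h then a.coeff h else 0 := by
    intro i
    rw [MonoidAlgebra.coeff_single_mul_apply, one_mul]
    show b.coeff ((g ^ i)⁻¹ * h) = _
    rw [show b.coeff ((g ^ i)⁻¹ * h) = if r ((g ^ i)⁻¹ * h) = (g ^ i)⁻¹ * h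
        then a.coeff ((g ^ i)⁻¹ * h) else 0 from rfl]
    rw [hr_const i h]
    by_cases hc : (g ^ i)⁻¹ * h = r h
    · rw [if_pos hc.symm, if_pos hc, hc, ha_rh]
    · rw [if_neg (fun hcc => hc hcc.symm), if_neg hc]
  have huniq : ∀ j ∈ Finset.range p, j ≠ k % p →
      (single (g ^ j) (1 : F) * b).coeff h = 0 := by
    intro j hj hjk
    rw [hterm j, if_neg]
    intro hcon
    have h2 : (g ^ j)⁻¹ * h = (g ^ k)⁻¹ * h := by rw [hcon, hrh]
    have h3 : g ^ j = g ^ k := by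
      have := mul_right_cancel h2
      exact inv_injective this
    rw [pow_inj_mod, hg] at h3
    rw [Nat.mod_eq_of_lt (Finset.mem_range.mp hj)] at h3
    exact hjk h3
  rw [Finset.sum_eq_single_of_mem (k % p) (Finset.mem_range.mpr (Nat.mod_lt _ hppos)) huniq]
  rw [hterm, if_pos]
  rw [← hg, pow_mod_orderOf]; exact hrh

/-- a nonzero finite-dimensional projective module over `F[H]`, with `F`
of characteristic `p`, has representation kernel of order coprime to `p`. -/
theorem stmt8 (p : ℕ) (hp : p.Prime) (F : Type) [Field F] [CharP F p]
    (H : Type) [Group H] [Finite H] (M : Rep F H) [FiniteDimensional F M.V]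
    (hM : Nontrivial M) (hproj : Projective M) :
    Nat.Coprime (Nat.card (repKer M)) p := by
  rw [Nat.coprime_comm]
  rw [Nat.Prime.coprime_iff_not_dvd hp]
  intro hdvd
  haveI : Fintype (repKer M) := Fintype.ofFinite _
  rw [Nat.card_eq_fintype_card] at hdvd
  haveI : Fact p.Prime := ⟨hp⟩
  obtain ⟨g, hg⟩ := exists_prime_orderOf_dvd_card (G := repKer M) p hdvd
  have hgord : orderOf (g : H) = p := by rw [Subgroup.orderOf_coe, hg]
  have hρg : M.ρ (g : H) = 1 := g.2
  -- transfer projectivity to the monoid algebra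
  have hproj' : Module.Projective (MonoidAlgebra F H) M.ρ.asModule := by
    rw [IsProjective.iff_projective]
    exact (Rep.equivalenceModuleMonoidAlgebra.map_projective_iff M).mpr hproj
  obtain ⟨s, hs⟩ := (Module.projective_def).mp hproj'
  -- single g 1 acts trivially on the module
  have h1 : ∀ m : M.ρ.asModule, (MonoidAlgebra.single (g : H) (1 : F)) • m = m := by
    intro m
    apply M.ρ.asModuleEquiv.injective
    rw [Representation.asModuleEquiv_map_smul, Representation.asAlgebraHom_single_one, hρg]
    rfl
  -- the norm element kills the module
  have hN : ∀ x : M.ρ.asModule,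
      (∑ i ∈ Finset.range p, MonoidAlgebra.single ((g : H) ^ i) (1 : F)) • x = 0 := by
    intro x
    rw [Finset.sum_smul]
    have heach : ∀ i : ℕ, (MonoidAlgebra.single ((g : H) ^ i) (1 : F)) • x = x := by
      intro i
      apply M.ρ.asModuleEquiv.injective
      rw [Representation.asModuleEquiv_map_smul, Representation.asAlgebraHom_single_one,
        map_pow, hρg, one_pow]
      rfl
    simp only [heach, Finset.sum_const, Finset.card_range]
    rw [← Nat.cast_smul_eq_nsmul F, CharP.cast_eq_zero F p, zero_smul]
  have key : ∀ m : M.ρ.asModule, m = 0 := by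
    intro m
    have hfix : ∀ m' : M.ρ.asModule,
        MonoidAlgebra.single (g : H) (1 : F) * (s m) m' = (s m) m' := by
      intro m'
      have h2 : s m = MonoidAlgebra.single (g : H) (1 : F) • s m := by
        conv_lhs => rw [← h1 m, map_smul]
      conv_rhs => rw [h2]
      rw [Finsupp.smul_apply, smul_eq_mul]
    have hm := hs m
    rw [Finsupp.linearCombination_apply] at hm
    rw [← hm, Finsupp.sum]
    refine Finset.sum_eq_zero fun m' _ => ?_
    obtain ⟨b, hb⟩ := fixed_eq_norm_mul hp.pos hgord ((s m) m') (hfix m')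
    show (s m) m' • m' = 0
    rw [hb, mul_smul, hN]
  obtain ⟨x, y, hxy⟩ := hM
  exact absurd ((key x).trans (key y).symm) hxy
end

section
/- Let p be a prime, F a field of characteristic p, and G a finite group. Then every 1-dimensional F[G]-module M is exprojective: if N denotes the kernel of the representation of G on M, then the quotient G/N has order coprime to p, and M is the inflation of a projective (1-dimensional) F[G/N]-module. -/
open CategoryTheory Limits

-- Auxiliary lemma: every module over the monoid algebra of a finite group whose order
-- is invertible is projective (Maschke).
theorem myProjAux (k : Type) [Field k] (G : Type) [Group G] [Fintype G]
    (hunit : IsUnit (Fintype.card G : k))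
    (V : Type) [AddCommGroup V] [Module (MonoidAlgebra k G) V] :
    Module.Projective (MonoidAlgebra k G) V := by
  classical
  let A := MonoidAlgebra k G
  letI : Module k V := Module.compHom V (algebraMap k A)
  haveI : IsScalarTower k A V := IsScalarTower.of_compHom k A V
  let π : (V →₀ A) →ₗ[A] V := Finsupp.linearCombination A _root_.id
  have hπ : Function.Surjective π := Finsupp.linearCombination_id_surjective A V
  obtain ⟨s, hs⟩ := (π.restrictScalars k).exists_rightInverse_of_surjective
    (LinearMap.range_eq_top.mpr hπ)
  have hs' : ∀ x : V, π (s x) = x := fun x => LinearMap.congr_fun hs x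
  let s' : V →ₗ[A] (V →₀ A) := s.equivariantProjection G
  have key : ∀ w : V, π (s' w) = w := by
    intro w
    rw [LinearMap.equivariantProjection_apply, LinearMap.map_smul_of_tower, map_sum]
    have h1 : ∀ g : G, π (s.conjugate g w) = w := by
      intro g
      rw [LinearMap.conjugate_apply, map_smul, hs', ← mul_smul,
        MonoidAlgebra.single_mul_single, inv_mul_cancel, mul_one, ← MonoidAlgebra.one_def,
        one_smul]
    simp only [h1]
    rw [Finset.sum_const, Finset.card_univ, ← Nat.cast_smul_eq_nsmul k, smul_smul,
      Nat.card_eq_fintype_card, Ring.inverse_mul_cancel _ hunit, one_smul]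
  exact Module.Projective.of_split s' π (LinearMap.ext key)



instance {F : Type} [Field F] {G : Type} [Group G] (M : Rep F G) : (repKer M).Normal := by
  constructor
  intro a ha g
  show M.ρ (g * a * g⁻¹) = 1
  have ha' : M.ρ a = 1 := ha
  rw [map_mul, map_mul, ha', mul_one, ← map_mul, mul_inv_cancel, map_one]

/-- every 1-dimensional `F[G]`-module `M` is exprojective: with `N` the
kernel of the representation, `G/N` has order coprime to `p` and `M` is the inflation
of a projective 1-dimensional `F[G/N]`-module. -/
theorem stmt12 (p : ℕ) (hp : p.Prime) (F : Type) [Field F] [CharP F p]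
    (G : Type) [Group G] [Finite G] (M : Rep F G)
    (hdim : Module.finrank F M.V = 1) :
    Exprojective M ∧
    Nat.Coprime (Nat.card (G ⧸ repKer M)) p ∧
    ∃ Q : Rep F (G ⧸ repKer M), Projective Q ∧ Module.finrank F Q.V = 1 ∧
      Nonempty (M ≅
        Rep.res (QuotientGroup.mk' (repKer M)) Q) := by
  classical
  set N := repKer M with hN
  let b : Module.Basis (Fin 1) F M.V := Module.basisUnique (Fin 1) hdim
  set v : M.V := b 0 with hv0
  have hv : v ≠ 0 := b.ne_zero 0
  let coord : M.V →ₗ[F] F := b.coord 0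
  have hrep : ∀ w : M.V, coord w • v = w := by
    intro w
    have h := b.sum_repr w
    simpa [Fin.sum_univ_one, coord, Module.Basis.coord_apply] using h
  have hcoordv : coord v = 1 := by
    simp [coord, hv0, Module.Basis.coord_apply]
  -- lifted representation
  have hker : ∀ g ∈ N, M.ρ.asGroupHom g = 1 := fun g hg => Units.ext (by
    rw [Representation.asGroupHom_apply]; exact hg)
  let ρb : Representation F (G ⧸ N) M.V :=
    (Units.coeHom _).comp (QuotientGroup.lift N M.ρ.asGroupHom hker)
  have hρb : ∀ g : G, ρb (QuotientGroup.mk g) = M.ρ g := fun g => by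
    simp only [ρb, MonoidHom.comp_apply, QuotientGroup.lift_mk, Units.coeHom_apply]
    exact Representation.asGroupHom_apply M.ρ g
  have hinj : ∀ x : G ⧸ N, ρb x = 1 → x = 1 := by
    intro x hx
    obtain ⟨g, rfl⟩ := QuotientGroup.mk_surjective x
    rw [QuotientGroup.eq_one_iff]
    show M.ρ g = 1
    rw [← hρb g, hx]
  -- χ
  let χ : (G ⧸ N) → F := fun x => coord (ρb x v)
  have hχ : ∀ x, ρb x v = χ x • v := fun x => (hrep _).symm
  have smul_inj : ∀ {a c : F}, a • v = c • v → a = c := fun h => smul_left_injective F hv h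
  have hχw : ∀ x w, ρb x w = (χ x * coord w) • v := by
    intro x w
    conv_lhs => rw [← hrep w]
    rw [map_smul, hχ, smul_smul, mul_comm]
  have hcoordρ : ∀ x w, coord (ρb x w) = χ x * coord w := by
    intro x w
    rw [hχw, map_smul, smul_eq_mul, hcoordv, mul_one]
  have hχ1 : χ 1 = 1 := by
    have h1 : ρb 1 v = v := by rw [map_one]; rfl
    show coord (ρb 1 v) = 1
    rw [h1, hcoordv]
  have hχmul : ∀ x y, χ (x * y) = χ x * χ y := by
    intro x y
    apply smul_inj
    rw [← hχ, map_mul]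
    show ρb x (ρb y v) = _
    rw [hχ y, map_smul, hχ x, smul_smul, mul_comm (χ y) (χ x)]
  have hχpow : ∀ (x : G ⧸ N) (n : ℕ), χ (x ^ n) = χ x ^ n := by
    intro x n
    induction n with
    | zero => simpa using hχ1
    | succ n ih => rw [pow_succ, pow_succ, hχmul, ih]
  have hχne : ∀ x, χ x ≠ 0 := by
    intro x h
    have h1 : χ x * χ x⁻¹ = 1 := by rw [← hχmul, mul_inv_cancel, hχ1]
    rw [h, zero_mul] at h1; exact zero_ne_one h1
  -- coprimality
  haveI : Finite (G ⧸ N) := Quotient.finite _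
  haveI : Fintype (G ⧸ N) := Fintype.ofFinite _
  have hnotdvd : ¬ p ∣ Nat.card (G ⧸ N) := by
    intro hdvd
    rw [Nat.card_eq_fintype_card] at hdvd
    haveI : Fact p.Prime := ⟨hp⟩
    obtain ⟨x, hx⟩ := exists_prime_orderOf_dvd_card p hdvd
    have hxp : χ x ^ p = 1 := by rw [← hχpow, ← hx, pow_orderOf_eq_one, hχ1]
    have hx1 : χ x = 1 := by
      apply frobenius_inj F p
      rw [frobenius_def, hxp, map_one]
    have hone : ρb x = 1 := by
      apply LinearMap.ext
      intro w
      show ρb x w = w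
      rw [hχw, hx1, one_mul, hrep]
    have := hinj x hone
    rw [this, orderOf_one] at hx
    exact hp.one_lt.ne' hx.symm
  have hcop : Nat.Coprime (Nat.card (G ⧸ N)) p :=
    Nat.Coprime.symm ((Nat.Prime.coprime_iff_not_dvd hp).2 hnotdvd)
  have hcardF : (Nat.card (G ⧸ N) : F) ≠ 0 := by
    rw [Ne, CharP.cast_eq_zero_iff F p]
    exact hnotdvd
  -- action on quotient
  have hgsmul : ∀ (g : G) (x : G ⧸ N) (w : M.V), ρb (g • x) w = M.ρ g (ρb x w) := by
    intro g x w
    refine QuotientGroup.induction_on x fun h => ?_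
    have h1 : g • (QuotientGroup.mk h : G ⧸ N) = QuotientGroup.mk (g * h) := rfl
    rw [h1, hρb, hρb, map_mul]
    rfl
  -- the two morphisms
  let rhom : MonoidAlgebra F (G ⧸ N) →ₗ[F] M.V := (Finsupp.linearCombination F (fun x => ρb x v)).comp
    (MonoidAlgebra.coeffLinearEquiv F).toLinearMap
  have rhom_single : ∀ (x : G ⧸ N) (c : F), rhom (MonoidAlgebra.single x c) = c • ρb x v := by
    intro x c
    simp [rhom]
  let ihom : M.V →ₗ[F] MonoidAlgebra F (G ⧸ N) :=
    (Nat.card (G ⧸ N) : F)⁻¹ • ∑ x : G ⧸ N, (χ x)⁻¹ • ((MonoidAlgebra.lsingle x).comp coord)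
  have ihom_apply : ∀ w, ihom w = (Nat.card (G ⧸ N) : F)⁻¹ •
      ∑ x : G ⧸ N, MonoidAlgebra.single x ((χ x)⁻¹ * coord w) := by
    intro w
    simp [ihom, LinearMap.sum_apply, MonoidAlgebra.smul_single, smul_eq_mul, mul_comm]
  have hPsingle : ∀ (g : G) (x : G ⧸ N) (c : F),
      (Rep.ofMulAction F G (G ⧸ N)).ρ g (MonoidAlgebra.single x c) = MonoidAlgebra.single (g • x) c :=
    fun g x c => Representation.ofMulAction_single g x c
  have hcoordg : ∀ (g : G) (w : M.V), coord (M.ρ g w) = χ (QuotientGroup.mk g) * coord w := by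
    intro g w
    rw [← hρb]
    exact hcoordρ _ w
  let rM : Rep.ofMulAction F G (G ⧸ N) ⟶ M := ConcreteCategory.ofHom {
    toLinearMap := rhom
    isIntertwining' := fun g => by
      refine MonoidAlgebra.lhom_ext' fun x => LinearMap.ext fun c => ?_
      show rhom ((Rep.ofMulAction F G (G ⧸ N)).ρ g (MonoidAlgebra.single x c))
        = M.ρ g (rhom (MonoidAlgebra.single x c))
      rw [hPsingle, rhom_single, rhom_single, (M.ρ g).map_smul c (ρb x v), hgsmul] }
  let iM : M ⟶ Rep.ofMulAction F G (G ⧸ N) := ConcreteCategory.ofHom {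
    toLinearMap := ihom
    isIntertwining' := fun gg => by
      refine LinearMap.ext fun w => ?_
      let g : G := gg
      show ihom (M.ρ g w) = (Rep.ofMulAction F G (G ⧸ N)).ρ g (ihom w)
      rw [ihom_apply, ihom_apply, map_smul, map_sum]
      simp_rw [hcoordg, hPsingle]
      congr 1
      refine (Fintype.sum_equiv (Equiv.mulLeft (QuotientGroup.mk g : G ⧸ N))
        (fun x => MonoidAlgebra.single (g • x) ((χ x)⁻¹ * coord w))
        (fun y => MonoidAlgebra.single y ((χ y)⁻¹ * (χ (QuotientGroup.mk g) * coord w)))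
        (fun x => ?_)).symm
      have hx2 : g • x = (QuotientGroup.mk g : G ⧸ N) * x :=
        QuotientGroup.induction_on x fun h => rfl
      rw [Equiv.coe_mulLeft, hx2, hχmul]
      congr 1
      rw [mul_inv_rev, mul_assoc, ← mul_assoc (χ (QuotientGroup.mk g))⁻¹,
        inv_mul_cancel₀ (hχne _), one_mul] }
  have hir : iM ≫ rM = 𝟙 M := by
    ext w
    show rhom (ihom w) = w
    rw [ihom_apply, map_smul, map_sum]
    have h2 : ∀ x : G ⧸ N, rhom (MonoidAlgebra.single x ((χ x)⁻¹ * coord w)) = coord w • v := by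
      intro x
      rw [rhom_single, hχ, smul_smul]
      congr 1
      rw [mul_comm ((χ x)⁻¹), mul_assoc, inv_mul_cancel₀ (hχne x), mul_one]
    simp_rw [h2]
    rw [Finset.sum_const, Finset.card_univ, ← Nat.cast_smul_eq_nsmul F, smul_smul,
      ← Nat.card_eq_fintype_card, inv_mul_cancel₀ hcardF, one_smul, hrep]
  -- direct summand of biproduct
  have hexp : IsDirectSummand M (⨁ fun _ : Fin 1 => Rep.ofMulAction F G (G ⧸ N)) := by
    refine ⟨iM ≫ biproduct.ι (fun _ : Fin 1 => Rep.ofMulAction F G (G ⧸ N)) 0,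
      biproduct.π _ 0 ≫ rM, ?_⟩
    rw [Category.assoc, biproduct.ι_π_self_assoc]
    exact hir
  -- the projective inflation
  let Q : Rep F (G ⧸ N) := Rep.of ρb
  have hQproj : Projective Q := by
    have hunit : IsUnit ((Fintype.card (G ⧸ N) : F)) := by
      refine Ne.isUnit ?_
      rw [← Nat.card_eq_fintype_card]
      exact hcardF
    have hmod : Module.Projective (MonoidAlgebra F (G ⧸ N)) Q.ρ.asModule :=
      myProjAux F (G ⧸ N) hunit _
    have h3 : Projective (Rep.toModuleMonoidAlgebra.obj Q) :=
      (IsProjective.iff_projective _).mp hmod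
    exact (Rep.equivalenceModuleMonoidAlgebra.map_projective_iff Q).mp h3
  have hQdim : Module.finrank F Q.V = 1 := hdim
  have hiso : Nonempty (M ≅
      Rep.res (QuotientGroup.mk' N) Q) := by
    have e : Rep.of M.ρ ≅ Rep.of (Q.ρ.comp (QuotientGroup.mk' N)) :=
      Rep.mkIso (Representation.Equiv.mk (LinearEquiv.refl F M.V) fun g => LinearMap.ext fun w => by
        show M.ρ g w = ρb (QuotientGroup.mk' N g) w
        rw [QuotientGroup.mk'_apply, hρb])
    exact ⟨e⟩
  exact ⟨⟨1, fun _ => N, fun _ => inferInstance, hexp⟩, hcop, Q, hQproj, hQdim, hiso⟩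
end

section
/- Let p be a prime, G a finite group, P a p-subgroup of G, and K the normal closure of P in G. Suppose that P is a Sylow p-subgroup of N_K(P) = N_G(P) ∩ K. Then: (i) P is a Sylow p-subgroup of K; (ii) K is p'-residue-free, i.e. K is generated by its elements of p-power order; (iii) G = N_G(P)·K; and (iv) the composite N_G(P) → G → G/K is surjective with kernel N_K(P), so it induces an isomorphism N_G(P)/N_K(P) ≅ G/K. -/
open Pointwise

private lemma aux_pdvd {X : Type*} [Group X] [Finite X] {p : ℕ} (hp : p.Prime)
    {H T : Subgroup X} (hT : IsPGroup p T) (hHT : H ≤ T) (hne : H ≠ T) :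
    p ∣ H.relIndex T := by
  haveI : Fact p.Prime := ⟨hp⟩
  obtain ⟨n, hn⟩ := IsPGroup.iff_card.mp hT
  have hdvd : H.relIndex T ∣ p ^ n := hn ▸ (H.subgroupOf T).index_dvd_card
  obtain ⟨k, hk, hrel⟩ := (Nat.dvd_prime_pow hp).mp hdvd
  rcases Nat.eq_zero_or_pos k with rfl | hkpos
  · exact absurd (le_antisymm hHT (Subgroup.relIndex_eq_one.mp (by simpa using hrel))) hne
  · exact hrel ▸ dvd_pow_self p hkpos.ne'

/-- let `P` be a `p`-subgroup of a finite group `G` and `K` the normal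
closure of `P` in `G`.  If `P` is a Sylow `p`-subgroup of `N_K(P) = N_G(P) ⊓ K`, then:
(i) `P` is a Sylow `p`-subgroup of `K`; (ii) `K` is `p'`-residue-free; (iii)
`G = N_G(P)·K`; (iv) the composite `N_G(P) → G → G/K` is surjective with kernel
`N_K(P)`, inducing an isomorphism `N_G(P)/N_K(P) ≅ G/K`. -/
theorem stmt13 (p : ℕ) (hp : p.Prime) (G : Type) [Group G] [Finite G]
    (P : Subgroup G) (hP : IsPGroup p P)
    (hSyl : ¬ p ∣ P.relIndex ((Subgroup.normalizer (P : Set G)) ⊓ Subgroup.normalClosure (P : Set G))) :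
    (P ≤ Subgroup.normalClosure (P : Set G) ∧
      ¬ p ∣ P.relIndex (Subgroup.normalClosure (P : Set G))) ∧
    IsPResidueFree p (Subgroup.normalClosure (P : Set G)) ∧
    ((Subgroup.normalizer (P : Set G)) : Set G) * (Subgroup.normalClosure (P : Set G) : Set G) = Set.univ ∧
    (Function.Surjective
        ((QuotientGroup.mk' (Subgroup.normalClosure (P : Set G))).comp (Subgroup.normalizer (P : Set G)).subtype) ∧
      MonoidHom.ker
          ((QuotientGroup.mk' (Subgroup.normalClosure (P : Set G))).comp (Subgroup.normalizer (P : Set G)).subtype) =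
        ((Subgroup.normalizer (P : Set G)) ⊓ Subgroup.normalClosure (P : Set G)).subgroupOf (Subgroup.normalizer (P : Set G)) ∧
      Nonempty
        (((Subgroup.normalizer (P : Set G)) ⧸ MonoidHom.ker
            ((QuotientGroup.mk' (Subgroup.normalClosure (P : Set G))).comp (Subgroup.normalizer (P : Set G)).subtype))
          ≃* (G ⧸ Subgroup.normalClosure (P : Set G)))) := by
  haveI : Fact p.Prime := ⟨hp⟩
  set K : Subgroup G := Subgroup.normalClosure (P : Set G) with hKdef
  have hPK : P ≤ K := Subgroup.le_normalClosure
  haveI : K.Normal := Subgroup.normalClosure_normal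
  -- Part (i)
  have hrelK : ¬ p ∣ P.relIndex K := by
    have hP' : IsPGroup p (P.subgroupOf K) := hP.comap_subtype
    obtain ⟨Q, hQ⟩ := hP'.exists_le_sylow
    have hPQ : P.subgroupOf K = (Q : Subgroup ↥K) := by
      by_contra hne
      apply hSyl
      set f : ↥(Q : Subgroup ↥K) →* G := K.subtype.comp (Q : Subgroup ↥K).subtype with hf
      set R : Subgroup ↥(Q : Subgroup ↥K) := (P.subgroupOf K).subgroupOf Q with hR
      have hmemR : ∀ x : ↥(Q : Subgroup ↥K), x ∈ R ↔ f x ∈ P := by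
        intro x
        simp [hR, hf, Subgroup.mem_subgroupOf]
      haveI : Group.IsNilpotent ↥(Q : Subgroup ↥K) := Q.isPGroup'.isNilpotent
      have hRlt : R < ⊤ := lt_top_iff_ne_top.mpr (fun htop =>
        hne (le_antisymm hQ (Subgroup.subgroupOf_eq_top.mp htop)))
      have hnc : R < (Subgroup.normalizer (R : Set ↥(Q : Subgroup ↥K))) := normalizerCondition_of_isNilpotent R hRlt
      set S : Subgroup G := (Subgroup.normalizer (R : Set ↥(Q : Subgroup ↥K))).map f with hS
      have hPS : P ≤ S := by
        intro x hx
        have hxK : x ∈ K := hPK hx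
        have hxQ : (⟨x, hxK⟩ : ↥K) ∈ (Q : Subgroup ↥K) :=
          hQ (by simpa [Subgroup.mem_subgroupOf] using hx)
        exact ⟨⟨⟨x, hxK⟩, hxQ⟩, le_of_lt hnc ((hmemR _).mpr hx), rfl⟩
      have hSK : S ≤ K := by
        rintro _ ⟨q, -, rfl⟩
        exact SetLike.coe_mem ((Q : Subgroup ↥K).subtype q)
      have hfwd : ∀ g ∈ S, ∀ y ∈ P, g * y * g⁻¹ ∈ P := by
        rintro _ ⟨q, hqmem, rfl⟩ y hy
        have hyK : y ∈ K := hPK hy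
        have hyQ : (⟨y, hyK⟩ : ↥K) ∈ (Q : Subgroup ↥K) :=
          hQ (by simpa [Subgroup.mem_subgroupOf] using hy)
        have hrR : (⟨⟨y, hyK⟩, hyQ⟩ : ↥(Q : Subgroup ↥K)) ∈ R := (hmemR _).mpr hy
        have h2 : q * ⟨⟨y, hyK⟩, hyQ⟩ * q⁻¹ ∈ R :=
          (Subgroup.mem_normalizer_iff.mp hqmem _).mp hrR
        have h3 := (hmemR _).mp h2
        simpa [map_mul, map_inv, show f ⟨⟨y, hyK⟩, hyQ⟩ = y from rfl] using h3
      have hSnorm : S ≤ (Subgroup.normalizer (P : Set G)) := by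
        intro g hg
        rw [Subgroup.mem_normalizer_iff]
        intro y
        constructor
        · exact fun hy => hfwd g hg y hy
        · intro hy
          have h := hfwd g⁻¹ (inv_mem hg) (g * y * g⁻¹) hy
          rwa [show g⁻¹ * (g * y * g⁻¹) * g⁻¹⁻¹ = y by group] at h
      have hSp : IsPGroup p S := (Q.isPGroup'.to_subgroup (Subgroup.normalizer (R : Set ↥(Q : Subgroup ↥K)))).map f
      have hPneS : P ≠ S := by
        obtain ⟨x, hxn, hxR⟩ := SetLike.exists_of_lt hnc
        intro h
        exact hxR ((hmemR x).mpr (h.symm ▸ (⟨x, hxn, rfl⟩ : f x ∈ S)))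
      have h1 : p ∣ P.relIndex S := aux_pdvd hp hSp hPS hPneS
      have h2 := Subgroup.relIndex_mul_relIndex P S ((Subgroup.normalizer (P : Set G)) ⊓ K) hPS
        (le_inf hSnorm hSK)
      exact h1.trans (Dvd.intro _ h2)
    show ¬ p ∣ (P.subgroupOf K).index
    rw [hPQ]
    exact Q.not_dvd_index
  -- Part (ii)
  have hres : IsPResidueFree p ↥K := by
    unfold IsPResidueFree
    apply Subgroup.map_injective K.subtype_injective
    rw [MonoidHom.map_closure, ← MonoidHom.range_eq_map, Subgroup.range_subtype]
    apply le_antisymm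
    · rw [Subgroup.closure_le]
      rintro _ ⟨y, -, rfl⟩
      exact y.2
    · have hsub : Group.conjugatesOfSet (P : Set G) ⊆
          K.subtype '' {x : ↥K | ∃ n : ℕ, x ^ p ^ n = 1} := by
        intro c hc
        obtain ⟨a, ha, hconj⟩ := Group.mem_conjugatesOfSet_iff.mp hc
        obtain ⟨u, hu⟩ := isConj_iff.mp hconj
        have hcK : c ∈ K := Subgroup.conjugatesOfSet_subset_normalClosure hc
        obtain ⟨n, hn⟩ := hP ⟨a, ha⟩
        have han : a ^ p ^ n = 1 := by simpa using congrArg Subtype.val hn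
        have hcn : c ^ p ^ n = 1 := by
          rw [← hu, conj_pow, han, mul_one, mul_inv_cancel]
        exact ⟨⟨c, hcK⟩, ⟨n, Subtype.ext (by simpa using hcn)⟩, rfl⟩
      calc K = Subgroup.normalClosure (P : Set G) := hKdef
        _ ≤ Subgroup.closure (K.subtype '' {x : ↥K | ∃ n : ℕ, x ^ p ^ n = 1}) :=
          Subgroup.closure_mono hsub
  -- Part (iii)
  let syl : Sylow p ↥K :=
    { toSubgroup := P.subgroupOf K
      isPGroup' := hP.comap_subtype
      is_maximal' := by
        intro Q hQ hle
        by_contra hne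
        have h1 : p ∣ (P.subgroupOf K).relIndex Q := aux_pdvd hp hQ hle (Ne.symm hne)
        have h2 := Subgroup.relIndex_mul_index hle
        exact hrelK (h1.trans (Dvd.intro _ h2)) }
  have hmap : (syl : Subgroup ↥K).map K.subtype = P := by
    show (P.subgroupOf K).map K.subtype = P
    rw [Subgroup.subgroupOf_map_subtype, inf_of_le_left hPK]
  have hsup : (Subgroup.normalizer (P : Set G)) ⊔ K = ⊤ := by
    have h := Sylow.normalizer_sup_eq_top (p := p) (N := K) syl
    rwa [hmap] at h
  have hprod : ((Subgroup.normalizer (P : Set G)) : Set G) * (K : Set G) = Set.univ := by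
    rw [← Subgroup.mul_normal, hsup, Subgroup.coe_top]
  -- Part (iv)
  have hsurj : Function.Surjective ((QuotientGroup.mk' K).comp (Subgroup.normalizer (P : Set G)).subtype) := by
    intro x
    obtain ⟨g, rfl⟩ := QuotientGroup.mk'_surjective K x
    have hg : g ∈ ((Subgroup.normalizer (P : Set G)) : Set G) * (K : Set G) := by rw [hprod]; trivial
    rw [Set.mem_mul] at hg
    obtain ⟨h, hh, k, hk, rfl⟩ := hg
    refine ⟨⟨h, hh⟩, ?_⟩
    show QuotientGroup.mk' K h = QuotientGroup.mk' K (h * k)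
    rw [QuotientGroup.mk'_apply, QuotientGroup.mk'_apply, QuotientGroup.eq]
    simpa [inv_mul_cancel_left] using hk
  have hker : MonoidHom.ker ((QuotientGroup.mk' K).comp (Subgroup.normalizer (P : Set G)).subtype) =
      ((Subgroup.normalizer (P : Set G)) ⊓ K).subgroupOf (Subgroup.normalizer (P : Set G)) := by
    ext x
    simp [MonoidHom.mem_ker, Subgroup.mem_subgroupOf, Subgroup.mem_inf,
      QuotientGroup.eq_one_iff, x.2]
  exact ⟨⟨hPK, hrelK⟩, hres, hprod, hsurj, hker,
    ⟨QuotientGroup.quotientKerEquivOfSurjective _ hsurj⟩⟩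
end
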